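/- arXiv:1707.07645 — 2 statements merged into one kernel-verified Lean document; each statement's English description precedes it below -/
import Mathlib

section
/- Let u, w : ℝ³ → ℝ be functions of (t,x,y) of class C², and let λ ∈ ℝ. Suppose that at every point of ℝ³ one has w_t = (λ² − λ·u_x − u_y)·w_x and w_y = (λ − u_x)·w_x. Then at every point p where w_x(p) ≠ 0, the function u satisfies u_yy = u_tx + u_y·u_xx − u_x·u_xy at p. -/
/-- Partial derivative of `f : ℝ³ → ℝ` in the direction `v`. -/
noncomputable def pd3 (v : ℝ × ℝ × ℝ) (f : ℝ × ℝ × ℝ → ℝ) : ℝ × ℝ × ℝ → ℝ :=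
  fun p => fderiv ℝ f p v

noncomputable def dt : (ℝ × ℝ × ℝ → ℝ) → ℝ × ℝ × ℝ → ℝ := pd3 (1, 0, 0)
noncomputable def dx : (ℝ × ℝ × ℝ → ℝ) → ℝ × ℝ × ℝ → ℝ := pd3 (0, 1, 0)
noncomputable def dy : (ℝ × ℝ × ℝ → ℝ) → ℝ × ℝ × ℝ → ℝ := pd3 (0, 0, 1)

lemma pd3_contDiff (v : ℝ × ℝ × ℝ) {f : ℝ × ℝ × ℝ → ℝ} (hf : ContDiff ℝ 2 f) :
    ContDiff ℝ 1 (pd3 v f) := by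
  have h : ContDiff ℝ 1 (fderiv ℝ f) := hf.fderiv_right (by norm_num)
  exact (ContinuousLinearMap.apply ℝ ℝ v).contDiff.comp h

lemma pd3_A {f g h : ℝ × ℝ × ℝ → ℝ} (v p : ℝ × ℝ × ℝ) (c m : ℝ)
    (hf : DifferentiableAt ℝ f p) (hg : DifferentiableAt ℝ g p)
    (hh : DifferentiableAt ℝ h p) :
    pd3 v (fun q => (c - m * f q - g q) * h q) p =
      (-m * pd3 v f p - pd3 v g p) * h p + (c - m * f p - g p) * pd3 v h p := by
  have d1 : HasFDerivAt (fun q => c - m * f q - g q)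
      ((0 : (ℝ × ℝ × ℝ) →L[ℝ] ℝ) - m • fderiv ℝ f p - fderiv ℝ g p) p :=
    ((hasFDerivAt_const c p).sub (hf.hasFDerivAt.const_mul m)).sub hg.hasFDerivAt
  have d2 : HasFDerivAt (fun q => (c - m * f q - g q) * h q) _ p := d1.mul hh.hasFDerivAt
  simp only [pd3, d2.fderiv]
  simp [ContinuousLinearMap.add_apply, ContinuousLinearMap.smul_apply,
    ContinuousLinearMap.sub_apply, ContinuousLinearMap.zero_apply]
  ring

lemma pd3_B {f h : ℝ × ℝ × ℝ → ℝ} (v p : ℝ × ℝ × ℝ) (c : ℝ)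
    (hf : DifferentiableAt ℝ f p) (hh : DifferentiableAt ℝ h p) :
    pd3 v (fun q => (c - f q) * h q) p =
      (- pd3 v f p) * h p + (c - f p) * pd3 v h p := by
  have d1 : HasFDerivAt (fun q => c - f q)
      ((0 : (ℝ × ℝ × ℝ) →L[ℝ] ℝ) - fderiv ℝ f p) p :=
    (hasFDerivAt_const c p).sub hf.hasFDerivAt
  have d2 : HasFDerivAt (fun q => (c - f q) * h q) _ p := d1.mul hh.hasFDerivAt
  simp only [pd3, d2.fderiv]
  simp [ContinuousLinearMap.add_apply, ContinuousLinearMap.smul_apply,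
    ContinuousLinearMap.sub_apply, ContinuousLinearMap.zero_apply]
  ring

lemma pd3_comm {f : ℝ × ℝ × ℝ → ℝ} (hf : ContDiff ℝ 2 f) (v w : ℝ × ℝ × ℝ)
    (p : ℝ × ℝ × ℝ) : pd3 v (pd3 w f) p = pd3 w (pd3 v f) p := by
  have hsymm : IsSymmSndFDerivAt ℝ f p :=
    hf.contDiffAt.isSymmSndFDerivAt (by norm_num)
  have hd : DifferentiableAt ℝ (fderiv ℝ f) p :=
    ((hf.fderiv_right (by norm_num : (1:WithTop ℕ∞) + 1 ≤ 2)).differentiable one_ne_zero) p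
  have key : ∀ a b : ℝ × ℝ × ℝ, pd3 a (pd3 b f) p = fderiv ℝ (fderiv ℝ f) p a b := by
    intro a b
    show fderiv ℝ (fun q => fderiv ℝ f q b) p a = _
    rw [fderiv_clm_apply hd (differentiableAt_const b)]
    simp
  rw [key, key, hsymm v w]

/-- Compatibility of the Lax pair forces the Mikhalev equation wherever `w_x ≠ 0`. -/
theorem lax_pair_implies_equation (u w : ℝ × ℝ × ℝ → ℝ) (l : ℝ)
    (hu : ContDiff ℝ 2 u) (hw : ContDiff ℝ 2 w)
    (h1 : ∀ p : ℝ × ℝ × ℝ, dt w p = (l ^ 2 - l * dx u p - dy u p) * dx w p)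
    (h2 : ∀ p : ℝ × ℝ × ℝ, dy w p = (l - dx u p) * dx w p) :
    ∀ p : ℝ × ℝ × ℝ, dx w p ≠ 0 →
      dy (dy u) p = dt (dx u) p + dy u p * dx (dx u) p - dx u p * dx (dy u) p := by
  intro p hwx
  have du : ∀ v : ℝ × ℝ × ℝ, DifferentiableAt ℝ (pd3 v u) p :=
    fun v => ((pd3_contDiff v hu).differentiable one_ne_zero) p
  have dw : ∀ v : ℝ × ℝ × ℝ, DifferentiableAt ℝ (pd3 v w) p :=
    fun v => ((pd3_contDiff v hw).differentiable one_ne_zero) p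
  have e1 : dt w = fun q => (l ^ 2 - l * dx u q - dy u q) * dx w q := funext h1
  have e2 : dy w = fun q => (l - dx u q) * dx w q := funext h2
  have E1 : dy (dt w) p = (-l * dy (dx u) p - dy (dy u) p) * dx w p +
      (l ^ 2 - l * dx u p - dy u p) * dy (dx w) p := by
    rw [e1]; exact pd3_A _ p _ l (du _) (du _) (dw _)
  have E2 : dt (dy w) p = (- dt (dx u) p) * dx w p + (l - dx u p) * dt (dx w) p := by
    rw [e2]; exact pd3_B _ p _ (du _) (dw _)
  have E3 : dx (dy w) p = (- dx (dx u) p) * dx w p + (l - dx u p) * dx (dx w) p := by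
    rw [e2]; exact pd3_B _ p _ (du _) (dw _)
  have E4 : dx (dt w) p = (-l * dx (dx u) p - dx (dy u) p) * dx w p +
      (l ^ 2 - l * dx u p - dy u p) * dx (dx w) p := by
    rw [e1]; exact pd3_A _ p _ l (du _) (du _) (dw _)
  have C1 : dy (dt w) p = dt (dy w) p := pd3_comm hw _ _ p
  have C2 : dy (dx w) p = dx (dy w) p := pd3_comm hw _ _ p
  have C3 : dt (dx w) p = dx (dt w) p := pd3_comm hw _ _ p
  have C4 : dx (dy u) p = dy (dx u) p := pd3_comm hu _ _ p
  have h5 : dt (dy w) p = (-l * dy (dx u) p - dy (dy u) p) * dx w p +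
      (l ^ 2 - l * dx u p - dy u p) *
        ((- dx (dx u) p) * dx w p + (l - dx u p) * dx (dx w) p) := by
    rw [← C1, E1, C2, E3]
  have h6 : dt (dy w) p = (- dt (dx u) p) * dx w p + (l - dx u p) *
      ((-l * dx (dx u) p - dx (dy u) p) * dx w p +
        (l ^ 2 - l * dx u p - dy u p) * dx (dx w) p) := by
    rw [E2, C3, E4]
  have final : (dy (dy u) p -
      (dt (dx u) p + dy u p * dx (dx u) p - dx u p * dx (dy u) p)) * dx w p = 0 := by
    linear_combination h5 - h6 + (l * dx w p) * C4
  rcases mul_eq_zero.mp final with h | h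
  · linarith
  · exact absurd h hwx
end

section
/- Let u : ℝ³ → ℝ be a C² solution of u_yy = u_tx + u_y·u_xx − u_x·u_xy, let T : ℝ → ℝ be a C² function, and let ε ∈ ℝ. Then the function v(t,x,y) := u(t, x + ε·T(t), y) − ε·T′(t)·y is again a solution of v_yy = v_tx + v_y·v_xx − v_x·v_xy on ℝ³. -/
open ContinuousLinearMap in
noncomputable def P1 : (ℝ × ℝ × ℝ) →L[ℝ] ℝ := fst ℝ ℝ (ℝ × ℝ)
open ContinuousLinearMap in
noncomputable def P2 : (ℝ × ℝ × ℝ) →L[ℝ] ℝ := (fst ℝ ℝ ℝ).comp (snd ℝ ℝ (ℝ × ℝ))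
open ContinuousLinearMap in
noncomputable def P3 : (ℝ × ℝ × ℝ) →L[ℝ] ℝ := (snd ℝ ℝ ℝ).comp (snd ℝ ℝ (ℝ × ℝ))

lemma sig_hasFDerivAt (T : ℝ → ℝ) (hT : Differentiable ℝ T) (ε : ℝ) (p : ℝ × ℝ × ℝ) :
    HasFDerivAt (fun q : ℝ × ℝ × ℝ => (q.1, q.2.1 + ε * T q.1, q.2.2))
      (P1.prod ((P2 + (ε * deriv T p.1) • P1).prod P3)) p := by
  have h1 : HasFDerivAt (fun q : ℝ × ℝ × ℝ => q.1) P1 p := hasFDerivAt_fst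
  have hTd : HasDerivAt T (deriv T p.1) p.1 := (hT p.1).hasDerivAt
  have h2a : HasFDerivAt (fun q : ℝ × ℝ × ℝ => T q.1) ((deriv T p.1) • P1) p :=
    hTd.comp_hasFDerivAt p h1
  have h2 : HasFDerivAt (fun q : ℝ × ℝ × ℝ => q.2.1 + ε * T q.1)
      (P2 + (ε * deriv T p.1) • P1) p := by
    have : HasFDerivAt (fun q : ℝ × ℝ × ℝ => q.2.1) P2 p :=
      hasFDerivAt_fst.comp p hasFDerivAt_snd
    have h := this.add (h2a.const_mul ε)
    rwa [smul_smul] at h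
  have h3 : HasFDerivAt (fun q : ℝ × ℝ × ℝ => q.2.2) P3 p :=
    hasFDerivAt_snd.comp p hasFDerivAt_snd
  exact h1.prodMk (h2.prodMk h3)

lemma comp_fderiv_apply (T : ℝ → ℝ) (hT : Differentiable ℝ T) (ε : ℝ)
    (f : ℝ × ℝ × ℝ → ℝ) (hf : Differentiable ℝ f) (p w : ℝ × ℝ × ℝ) :
    fderiv ℝ (fun q : ℝ × ℝ × ℝ => f (q.1, q.2.1 + ε * T q.1, q.2.2)) p w
      = fderiv ℝ f (p.1, p.2.1 + ε * T p.1, p.2.2)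
          (w.1, w.2.1 + ε * deriv T p.1 * w.1, w.2.2) := by
  have h := ((hf _).hasFDerivAt.comp p (sig_hasFDerivAt T hT ε p)).fderiv
  rw [show (fun q : ℝ × ℝ × ℝ => f (q.1, q.2.1 + ε * T q.1, q.2.2))
      = f ∘ (fun q : ℝ × ℝ × ℝ => (q.1, q.2.1 + ε * T q.1, q.2.2)) from rfl, h]
  simp [P1, P2, P3]

lemma comp_diffAt (T : ℝ → ℝ) (hT : Differentiable ℝ T) (ε : ℝ)
    (f : ℝ × ℝ × ℝ → ℝ) (hf : Differentiable ℝ f) (p : ℝ × ℝ × ℝ) :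
    DifferentiableAt ℝ (fun q : ℝ × ℝ × ℝ => f (q.1, q.2.1 + ε * T q.1, q.2.2)) p :=
  ((hf _).hasFDerivAt.comp p (sig_hasFDerivAt T hT ε p)).differentiableAt

lemma aux_hasFDerivAt (S : ℝ → ℝ) (hS : Differentiable ℝ S) (ε : ℝ) (p : ℝ × ℝ × ℝ) :
    HasFDerivAt (fun q : ℝ × ℝ × ℝ => ε * S q.1)
      ((ε * deriv S p.1) • P1) p := by
  have h : HasFDerivAt (fun q : ℝ × ℝ × ℝ => S q.1) ((deriv S p.1) • P1) p :=
    (hS p.1).hasDerivAt.comp_hasFDerivAt p hasFDerivAt_fst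
  have h2 := h.const_mul ε
  rwa [smul_smul] at h2

lemma g_hasFDerivAt (S : ℝ → ℝ) (hS : Differentiable ℝ S) (ε : ℝ) (p : ℝ × ℝ × ℝ) :
    HasFDerivAt (fun q : ℝ × ℝ × ℝ => ε * S q.1 * q.2.2)
      ((ε * S p.1) • P3 + p.2.2 • ((ε * deriv S p.1) • P1)) p := by
  have hb : HasFDerivAt (fun q : ℝ × ℝ × ℝ => q.2.2) P3 p :=
    hasFDerivAt_snd.comp p hasFDerivAt_snd
  exact (aux_hasFDerivAt S hS ε p).mul hb

lemma g_fderiv_apply (S : ℝ → ℝ) (hS : Differentiable ℝ S) (ε : ℝ) (p w : ℝ × ℝ × ℝ) :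
    fderiv ℝ (fun q : ℝ × ℝ × ℝ => ε * S q.1 * q.2.2) p w
      = ε * S p.1 * w.2.2 + ε * deriv S p.1 * w.1 * p.2.2 := by
  rw [(g_hasFDerivAt S hS ε p).fderiv]
  simp [P1, P3]
  ring

theorem theta4_flow_maps_solutions (u : ℝ × ℝ × ℝ → ℝ) (hu : ContDiff ℝ 2 u)
    (T : ℝ → ℝ) (hT : ContDiff ℝ 2 T) (ε : ℝ)
    (heq : ∀ p : ℝ × ℝ × ℝ,
      dy (dy u) p = dt (dx u) p + dy u p * dx (dx u) p - dx u p * dx (dy u) p) :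
    ∀ p : ℝ × ℝ × ℝ,
      (fun v : ℝ × ℝ × ℝ → ℝ =>
        dy (dy v) p = dt (dx v) p + dy v p * dx (dx v) p - dx v p * dx (dy v) p)
      (fun q => u (q.1, q.2.1 + ε * T q.1, q.2.2) - ε * deriv T q.1 * q.2.2) := by
  have hT1 : Differentiable ℝ T := hT.differentiable two_ne_zero
  have hu1 : Differentiable ℝ u := hu.differentiable two_ne_zero
  have hdT : Differentiable ℝ (deriv T) := by
    have h2 : ContDiff ℝ (1+1 : ℕ) T := by exact_mod_cast hT
    exact ((contDiff_succ_iff_deriv.mp (by exact_mod_cast h2)).2.2).differentiable one_ne_zero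
  have hux : Differentiable ℝ (dx u) := by
    have : ContDiff ℝ 1 (fun p : ℝ × ℝ × ℝ => fderiv ℝ u p ((0:ℝ),(1:ℝ),(0:ℝ))) :=
      (hu.fderiv_right (le_refl 2)).clm_apply contDiff_const
    exact this.differentiable one_ne_zero
  have huy : Differentiable ℝ (dy u) := by
    have : ContDiff ℝ 1 (fun p : ℝ × ℝ × ℝ => fderiv ℝ u p ((0:ℝ),(0:ℝ),(1:ℝ))) :=
      (hu.fderiv_right (le_refl 2)).clm_apply contDiff_const
    exact this.differentiable one_ne_zero
  intro p
  have pd3_eq : ∀ (v : ℝ × ℝ × ℝ) (f : ℝ × ℝ × ℝ → ℝ), pd3 v f = fun p => fderiv ℝ f p v :=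
    fun _ _ => rfl
  simp only [dt, dx, dy, pd3_eq]
  set σ : ℝ × ℝ × ℝ → ℝ × ℝ × ℝ := fun q => (q.1, q.2.1 + ε * T q.1, q.2.2) with hσ
  -- first derivatives of v
  have hgd : ∀ q : ℝ × ℝ × ℝ,
      DifferentiableAt ℝ (fun q : ℝ × ℝ × ℝ => ε * deriv T q.1 * q.2.2) q :=
    fun q => (g_hasFDerivAt (deriv T) hdT ε q).differentiableAt
  have hv1 : ∀ q w, fderiv ℝ
      (fun q : ℝ × ℝ × ℝ => u (q.1, q.2.1 + ε * T q.1, q.2.2) - ε * deriv T q.1 * q.2.2) q w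
      = fderiv ℝ u (σ q) (w.1, w.2.1 + ε * deriv T q.1 * w.1, w.2.2)
        - (ε * deriv T q.1 * w.2.2 + ε * deriv (deriv T) q.1 * w.1 * q.2.2) := by
    intro q w
    rw [fderiv_fun_sub (comp_diffAt T hT1 ε u hu1 q) (hgd q)]
    rw [ContinuousLinearMap.sub_apply]
    rw [comp_fderiv_apply T hT1 ε u hu1 q w, g_fderiv_apply (deriv T) hdT ε q w]
  have hdxv : (fun q : ℝ × ℝ × ℝ => fderiv ℝ
      (fun q : ℝ × ℝ × ℝ => u (q.1, q.2.1 + ε * T q.1, q.2.2) - ε * deriv T q.1 * q.2.2) q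
      ((0:ℝ),(1:ℝ),(0:ℝ))) = fun q => dx u (σ q) := by
    funext q; rw [hv1 q]; simp [dx, pd3]
  have hdyv : (fun q : ℝ × ℝ × ℝ => fderiv ℝ
      (fun q : ℝ × ℝ × ℝ => u (q.1, q.2.1 + ε * T q.1, q.2.2) - ε * deriv T q.1 * q.2.2) q
      ((0:ℝ),(0:ℝ),(1:ℝ))) = fun q => dy u (σ q) - ε * deriv T q.1 := by
    funext q; rw [hv1 q]; simp [dy, pd3]
  rw [hdxv, hdyv]
  -- second derivatives
  have hsplit : ∀ (f : ℝ × ℝ × ℝ → ℝ) (hf : Differentiable ℝ f) (w : ℝ × ℝ × ℝ),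
      fderiv ℝ (fun q => f (σ q)) p w
        = fderiv ℝ f (σ p) (w.1, w.2.1 + ε * deriv T p.1 * w.1, w.2.2) :=
    fun f hf w => comp_fderiv_apply T hT1 ε f hf p w
  have hdtdxv : fderiv ℝ (fun q => dx u (σ q)) p ((1:ℝ),(0:ℝ),(0:ℝ))
      = dt (dx u) (σ p) + ε * deriv T p.1 * dx (dx u) (σ p) := by
    rw [hsplit (dx u) hux]
    have : ((1:ℝ), (0:ℝ) + ε * deriv T p.1 * 1, (0:ℝ))
        = ((1:ℝ),(0:ℝ),(0:ℝ)) + (ε * deriv T p.1) • ((0:ℝ),(1:ℝ),(0:ℝ)) := by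
      simp [Prod.ext_iff]
    rw [this, map_add, map_smul]
    simp [dt, dx, pd3]
  have hdxdxv : fderiv ℝ (fun q => dx u (σ q)) p ((0:ℝ),(1:ℝ),(0:ℝ))
      = dx (dx u) (σ p) := by
    rw [hsplit (dx u) hux]; simp [dx, pd3]
  have hdydiff : ∀ q, DifferentiableAt ℝ (fun q => dy u (σ q)) q :=
    fun q => comp_diffAt T hT1 ε (dy u) huy q
  have haux : ∀ q : ℝ × ℝ × ℝ, DifferentiableAt ℝ (fun q : ℝ × ℝ × ℝ => ε * deriv T q.1) q :=
    fun q => (aux_hasFDerivAt (deriv T) hdT ε q).differentiableAt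
  have hdydyv : fderiv ℝ (fun q => dy u (σ q) - ε * deriv T q.1) p ((0:ℝ),(0:ℝ),(1:ℝ))
      = dy (dy u) (σ p) := by
    rw [fderiv_fun_sub (hdydiff p) (haux p), ContinuousLinearMap.sub_apply,
      hsplit (dy u) huy, (aux_hasFDerivAt (deriv T) hdT ε p).fderiv]
    simp [dy, pd3, P1]
  have hdxdyv : fderiv ℝ (fun q => dy u (σ q) - ε * deriv T q.1) p ((0:ℝ),(1:ℝ),(0:ℝ))
      = dx (dy u) (σ p) := by
    rw [fderiv_fun_sub (hdydiff p) (haux p), ContinuousLinearMap.sub_apply,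
      hsplit (dy u) huy, (aux_hasFDerivAt (deriv T) hdT ε p).fderiv]
    simp [dx, pd3, P1]
  rw [hdydyv, hdtdxv, hdxdxv, hdxdyv, hv1 p ((0:ℝ),(0:ℝ),(1:ℝ)),
    hv1 p ((0:ℝ),(1:ℝ),(0:ℝ))]
  have h := heq (σ p)
  simp only [dx, dy, dt, pd3, mul_zero, mul_one, zero_mul, add_zero, zero_add,
    sub_zero] at h ⊢
  rw [h]
  ring
end
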